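/- arXiv:1802.03386 — 5 statements merged into one kernel-verified Lean document; each statement's English description precedes it below -/
import Mathlib

section
/- Mixture fixed-point property for minority arms: suppose q ∈ Δ_K satisfies q = Σ_{e∈E} W(e)·ξ^e + Σ_{s∈S} W(s)·T^k_s q, where each ξ^e ∈ Δ_K, W is a probability weighting over E ∪ S, and ζ = (Σ_{e∈E} W(e)·ξ^e)/(Σ_{e∈E} W(e)). Then for every minority arm i > k, q(i) ≤ ζ(i), and for every majority arm i ≤ k, q(i) ≥ ζ(i). -/
open Finset

/-- The truncation operator `T^k_s` (arms are 0-indexed: majority arms are `i < k`,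
minority arms are `i ≥ k`). -/
noncomputable def trunc (K k : ℕ) (s : ℝ) (q : Fin K → ℝ) : Fin K → ℝ := fun i =>
  if k ≤ (i : ℕ) then (if q i ≤ s then 0 else q i)
  else q i * (1 + (∑ j : Fin K, if k ≤ (j : ℕ) ∧ q j ≤ s then q j else 0) /
      (∑ j : Fin K, if (j : ℕ) < k then q j else 0))

/-- mixture fixed-point property. If `q` is the `W`-mixture of the expert
advices `ξ^e` (`e ∈ E`) and the auxiliary truncated experts `T^k_s q` (`s ∈ S`), then
minority coordinates of `q` are below those of `ζ` and majority coordinates are above. -/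
theorem fixed_point_majority_minority (K k : ℕ) {E : Type*} [Fintype E]
    (S : Finset ℝ) (hS : ∀ s ∈ S, s ∈ Set.Ioc (0 : ℝ) (1 / 2))
    (WE : E → ℝ) (WS : ℝ → ℝ) (ξ : E → Fin K → ℝ) (ζ q : Fin K → ℝ)
    (hK : 1 ≤ K) (hk1 : 1 ≤ k) (hkK : k ≤ K)
    (hWE0 : ∀ e, 0 ≤ WE e) (hWS0 : ∀ s ∈ S, 0 ≤ WS s)
    (hW1 : (∑ e, WE e) + ∑ s ∈ S, WS s = 1)
    (hWEpos : 0 < ∑ e, WE e)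
    (hξ0 : ∀ e i, 0 ≤ ξ e i) (hξ1 : ∀ e, ∑ i, ξ e i = 1)
    (hζ : ∀ i, ζ i = (∑ e, WE e * ξ e i) / ∑ e, WE e)
    (hq0 : ∀ i, 0 ≤ q i) (hq1 : ∑ i, q i = 1)
    (hqmaj : 0 < ∑ j : Fin K, if (j : ℕ) < k then q j else 0)
    (hζmaj : 0 < ∑ j : Fin K, if (j : ℕ) < k then ζ j else 0)
    (hfix : ∀ i, q i = (∑ e, WE e * ξ e i) + ∑ s ∈ S, WS s * trunc K k s q i) :
    ∀ i : Fin K, (k ≤ (i : ℕ) → q i ≤ ζ i) ∧ ((i : ℕ) < k → ζ i ≤ q i) := by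
  intro i
  have hA : (0:ℝ) < ∑ e, WE e := hWEpos
  have hζi : (∑ e, WE e) * ζ i = ∑ e, WE e * ξ e i := by
    rw [hζ]; field_simp
  have hB : ∑ s ∈ S, WS s = 1 - ∑ e, WE e := by linarith
  constructor
  · intro hi
    have hsum : ∑ s ∈ S, WS s * trunc K k s q i ≤ (∑ s ∈ S, WS s) * q i := by
      rw [Finset.sum_mul]
      refine Finset.sum_le_sum fun s hs => ?_
      refine mul_le_mul_of_nonneg_left ?_ (hWS0 s hs)
      simp only [trunc, if_pos hi]
      split
      · exact hq0 i
      · exact le_refl _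
    rw [hB] at hsum
    have hf := hfix i
    have h2 : (∑ e, WE e) * q i ≤ (∑ e, WE e) * ζ i := by
      rw [hζi]; nlinarith [hf, hsum]
    exact le_of_mul_le_mul_left h2 hA
  · intro hi
    have hsum : (∑ s ∈ S, WS s) * q i ≤ ∑ s ∈ S, WS s * trunc K k s q i := by
      rw [Finset.sum_mul]
      refine Finset.sum_le_sum fun s hs => ?_
      refine mul_le_mul_of_nonneg_left ?_ (hWS0 s hs)
      simp only [trunc, if_neg (by omega : ¬ k ≤ (i:ℕ))]
      have hM : 0 ≤ ∑ j : Fin K, if k ≤ (j:ℕ) ∧ q j ≤ s then q j else 0 := by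
        refine Finset.sum_nonneg fun j _ => ?_
        split
        · exact hq0 j
        · exact le_refl _
      have hdiv : 0 ≤ (∑ j : Fin K, if k ≤ (j:ℕ) ∧ q j ≤ s then q j else 0) /
          (∑ j : Fin K, if (j:ℕ) < k then q j else 0) := div_nonneg hM hqmaj.le
      nlinarith [hq0 i]
    rw [hB] at hsum
    have hf := hfix i
    have h2 : (∑ e, WE e) * ζ i ≤ (∑ e, WE e) * q i := by
      rw [hζi]; nlinarith [hf, hsum]
    exact le_of_mul_le_mul_left h2 hA
end

section
/- Majority-ratio identity for the auxiliary experts: under the fixed-point equation q = Σ_{e∈E} W(e)ξ^e + Σ_{s∈S} W(s)T^k_s q, for every s ∈ S and every i ≤ k one has (T^k_s q)(i) = (ζ(i)/Σ_{j≤k} ζ(j)) · (1 − Σ_{j>k} (T^k_s q)(j)), where ζ is the normalized E-average of the ξ^e. -/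
open Finset

/-- majority-ratio identity for the auxiliary experts under the
fixed-point equation. -/
theorem auxiliary_expert_majority_ratio (K k : ℕ) {E : Type*} [Fintype E]
    (S : Finset ℝ) (hS : ∀ s ∈ S, s ∈ Set.Ioc (0 : ℝ) (1 / 2))
    (WE : E → ℝ) (WS : ℝ → ℝ) (ξ : E → Fin K → ℝ) (ζ q : Fin K → ℝ)
    (hK : 1 ≤ K) (hk1 : 1 ≤ k) (hkK : k ≤ K)
    (hWE0 : ∀ e, 0 ≤ WE e) (hWS0 : ∀ s ∈ S, 0 ≤ WS s)
    (hW1 : (∑ e, WE e) + ∑ s ∈ S, WS s = 1)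
    (hWEpos : 0 < ∑ e, WE e)
    (hξ0 : ∀ e i, 0 ≤ ξ e i) (hξ1 : ∀ e, ∑ i, ξ e i = 1)
    (hζ : ∀ i, ζ i = (∑ e, WE e * ξ e i) / ∑ e, WE e)
    (hq0 : ∀ i, 0 ≤ q i) (hq1 : ∑ i, q i = 1)
    (hqmaj : 0 < ∑ j : Fin K, if (j : ℕ) < k then q j else 0)
    (hζmaj : 0 < ∑ j : Fin K, if (j : ℕ) < k then ζ j else 0)
    (hfix : ∀ i, q i = (∑ e, WE e * ξ e i) + ∑ s ∈ S, WS s * trunc K k s q i) :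
    ∀ s ∈ S, ∀ i : Fin K, (i : ℕ) < k →
      trunc K k s q i =
        (ζ i / ∑ j : Fin K, if (j : ℕ) < k then ζ j else 0) *
          (1 - ∑ j : Fin K, if k ≤ (j : ℕ) then trunc K k s q j else 0) := by

  -- abbreviations
  set B : ℝ := ∑ j : Fin K, if (j : ℕ) < k then q j else 0 with hB
  set Z : ℝ := ∑ j : Fin K, if (j : ℕ) < k then ζ j else 0 with hZ
  have hBne : B ≠ 0 := ne_of_gt hqmaj
  have hZne : Z ≠ 0 := ne_of_gt hζmaj
  have hWne : (∑ e, WE e) ≠ 0 := ne_of_gt hWEpos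
  set c : ℝ → ℝ := fun s => 1 + (∑ j : Fin K, if k ≤ (j : ℕ) ∧ q j ≤ s then q j else 0) / B
    with hc
  have htrunc_lt : ∀ s : ℝ, ∀ i : Fin K, (i : ℕ) < k → trunc K k s q i = q i * c s := by
    intro s i hi
    simp [trunc, Nat.not_le.mpr hi, hc, hB]
  -- sum identity: B * c s = 1 - T s
  have hsum : ∀ s : ℝ,
      B * c s = 1 - ∑ j : Fin K, if k ≤ (j : ℕ) then trunc K k s q j else 0 := by
    intro s
    have hsplit : ∀ j : Fin K, q j = (if (j : ℕ) < k then q j else 0)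
        + (if k ≤ (j : ℕ) ∧ q j ≤ s then q j else 0)
        + (if k ≤ (j : ℕ) then trunc K k s q j else 0) := by
      intro j
      by_cases h : k ≤ (j : ℕ)
      · by_cases h2 : q j ≤ s <;> simp [trunc, h, h2, Nat.not_lt.mpr h]
      · simp [h, Nat.lt_of_not_le h]
    have h1 : (1 : ℝ) = B + (∑ j : Fin K, if k ≤ (j : ℕ) ∧ q j ≤ s then q j else 0)
        + ∑ j : Fin K, if k ≤ (j : ℕ) then trunc K k s q j else 0 := by
      rw [← hq1]
      rw [hB, ← Finset.sum_add_distrib, ← Finset.sum_add_distrib]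
      exact Finset.sum_congr rfl fun j _ => hsplit j
    have : B * c s = B + (∑ j : Fin K, if k ≤ (j : ℕ) ∧ q j ≤ s then q j else 0) := by
      simp only [hc]
      field_simp
    rw [this, h1]; ring
  -- key: q i * (1 - D) = (∑ e, WE e) * ζ i for i < k
  set D : ℝ := ∑ s' ∈ S, WS s' * c s' with hD
  have hzeta : ∀ i : Fin K, (∑ e, WE e * ξ e i) = (∑ e, WE e) * ζ i := by
    intro i; rw [hζ i]; field_simp
  have hkey : ∀ i : Fin K, (i : ℕ) < k → q i * (1 - D) = (∑ e, WE e) * ζ i := by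
    intro i hi
    have h := hfix i
    rw [hzeta i] at h
    have h2 : (∑ s' ∈ S, WS s' * trunc K k s' q i) = q i * D := by
      rw [hD, Finset.mul_sum]
      refine Finset.sum_congr rfl fun s' _ => ?_
      rw [htrunc_lt s' i hi]; ring
    rw [h2] at h
    linarith
  have hBD : B * (1 - D) = (∑ e, WE e) * Z := by
    rw [hB, hZ, Finset.sum_mul, Finset.mul_sum]
    refine Finset.sum_congr rfl fun j _ => ?_
    by_cases h : (j : ℕ) < k
    · simp only [h, if_true]; exact hkey j h
    · simp [h]
  have hDlt : (0 : ℝ) < 1 - D := by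
    have : 0 < (∑ e, WE e) * Z := mul_pos hWEpos hζmaj
    nlinarith
  have hqZ : ∀ i : Fin K, (i : ℕ) < k → q i * Z = ζ i * B := by
    intro i hi
    have h1 := hkey i hi
    have h3 : q i * (1 - D) * Z = ζ i * (B * (1 - D)) := by
      rw [h1, hBD]; ring
    have := ne_of_gt hDlt
    nlinarith [h3]
  intro s _ i hi
  rw [htrunc_lt s i hi, ← hsum s]
  have := hqZ i hi
  field_simp
  linear_combination c s * this
end

section
/- Key lemma (2-armed case): Let T rounds be given with probability vectors q_t ∈ Δ_2 satisfying q_t(1) ≥ q_t(2), losses ℓ̄_t ∈ [0,1]^2 satisfying ℓ̄_t(2) = 0 whenever q_t(2) ≤ γ. Set M = Σ_t ℓ̄_t(1), m = Σ_t ℓ̄_t(2), and for s ∈ [γ, 1/2] let L^s = Σ_t ⟨T_s q_t, ℓ̄_t⟩ where T_s q = (1,0) if q(2) ≤ s and T_s q = q otherwise, and L = L^γ. If m − M > 0, then there exists s ∈ (γ, 1/2] such that m − M ≤ (L − L^s)/γ. -/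
open Finset

lemma two_arm_aux (x a : ℕ → ℝ) (S : Finset ℕ) :
    ∀ c : ℝ, 0 ≤ c → c < 1/2 → (∀ t ∈ S, c < x t ∧ x t ≤ 1/2) →
    ∃ v, c < v ∧ v ≤ 1/2 ∧
      c * ∑ t ∈ S, a t ≤ ∑ t ∈ S, (if x t ≤ v then x t * a t else 0) := by
  induction S using Finset.strongInduction with
  | _ S ih =>
  intro c hc0 hc2 hS
  rcases S.eq_empty_or_nonempty with rfl | hne
  · exact ⟨1/2, hc2, le_refl _, by simp⟩
  obtain ⟨t0, ht0S, ht0⟩ := S.exists_mem_eq_inf' hne x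
  set x0 := S.inf' hne x with hx0def
  have hx0le : ∀ t ∈ S, x0 ≤ x t := fun t ht => Finset.inf'_le x ht
  have hcx0 : c < x0 := ht0 ▸ (hS t0 ht0S).1
  have hx0half : x0 ≤ 1/2 := ht0 ▸ (hS t0 ht0S).2
  by_cases hsum : ∑ t ∈ S, a t ≤ 0
  · refine ⟨(c + x0)/2, by linarith, by linarith, ?_⟩
    have hz : ∑ t ∈ S, (if x t ≤ (c + x0)/2 then x t * a t else 0) = 0 :=
      Finset.sum_eq_zero fun t ht => by
        rw [if_neg]
        have := hx0le t ht
        push_neg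
        linarith
    rw [hz]
    exact mul_nonpos_of_nonneg_of_nonpos hc0 hsum
  push_neg at hsum
  rcases lt_or_eq_of_le hx0half with hx05 | hx05
  · have hssub : S.filter (fun t => ¬ x t = x0) ⊂ S := by
      apply Finset.filter_ssubset.mpr
      exact ⟨t0, ht0S, by simp [← ht0]⟩
    obtain ⟨v, hv1, hv2, hv3⟩ := ih _ hssub x0 (by linarith) hx05
      (fun t ht => by
        rcases Finset.mem_filter.mp ht with ⟨htS, hne'⟩
        exact ⟨lt_of_le_of_ne (hx0le t htS) (Ne.symm hne'), (hS t htS).2⟩)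
    refine ⟨v, lt_trans hcx0 hv1, hv2, ?_⟩
    have hsplit := Finset.sum_filter_add_sum_filter_not S (fun t => x t = x0)
      (fun t => if x t ≤ v then x t * a t else 0)
    have hsplita := Finset.sum_filter_add_sum_filter_not S (fun t => x t = x0) a
    have h0 : ∑ t ∈ S.filter (fun t => x t = x0), (if x t ≤ v then x t * a t else 0)
        = x0 * ∑ t ∈ S.filter (fun t => x t = x0), a t := by
      rw [Finset.mul_sum]
      apply Finset.sum_congr rfl
      intro t ht
      rcases Finset.mem_filter.mp ht with ⟨_, heq⟩
      rw [if_pos (by rw [heq]; linarith), heq]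
    have hmul : c * ∑ t ∈ S, a t ≤ x0 * ∑ t ∈ S, a t :=
      mul_le_mul_of_nonneg_right (le_of_lt hcx0) (le_of_lt hsum)
    calc c * ∑ t ∈ S, a t ≤ x0 * ∑ t ∈ S, a t := hmul
      _ = x0 * ∑ t ∈ S.filter (fun t => x t = x0), a t
          + x0 * ∑ t ∈ S.filter (fun t => ¬ x t = x0), a t := by
          rw [← mul_add, hsplita]
      _ ≤ ∑ t ∈ S, (if x t ≤ v then x t * a t else 0) := by
          rw [← hsplit, h0]; linarith [hv3]
  · refine ⟨1/2, hc2, le_refl _, ?_⟩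
    have hall : ∀ t ∈ S, (if x t ≤ (1:ℝ)/2 then x t * a t else 0) = (1/2) * a t := by
      intro t ht
      have h1 := hx0le t ht
      have h2 := (hS t ht).2
      rw [hx05] at h1
      have hxe : x t = 1/2 := le_antisymm h2 h1
      rw [if_pos (le_of_eq hxe), hxe]
    rw [Finset.sum_congr rfl hall, ← Finset.mul_sum]
    exact mul_le_mul_of_nonneg_right (le_of_lt hc2) (le_of_lt hsum)

/-- key lemma in the two-armed case. Here `x t = q_t(2)`, `l1 t = ℓ̄_t(1)`,
`l2 t = ℓ̄_t(2)`, and `L s = Σ_t ⟨T_s q_t, ℓ̄_t⟩` where `T_s q = (1,0)` if `q(2) ≤ s`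
and `T_s q = q` otherwise. -/
theorem two_arm_key_lemma (T : ℕ) (hT : 1 ≤ T) (γ : ℝ)
    (hγ0 : 0 < γ) (hγ2 : γ ≤ 1 / 2)
    (x l1 l2 : ℕ → ℝ)
    (hx0 : ∀ t < T, 0 ≤ x t) (hx : ∀ t < T, x t ≤ 1 / 2)
    (hl1 : ∀ t < T, l1 t ∈ Set.Icc (0 : ℝ) 1) (hl2 : ∀ t < T, l2 t ∈ Set.Icc (0 : ℝ) 1)
    (hzero : ∀ t < T, x t ≤ γ → l2 t = 0)
    (M m : ℝ) (hM : M = ∑ t ∈ Finset.range T, l1 t) (hm : m = ∑ t ∈ Finset.range T, l2 t)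
    (L : ℝ → ℝ)
    (hL : ∀ s, L s = ∑ t ∈ Finset.range T,
      (if x t ≤ s then 1 * l1 t + 0 * l2 t else (1 - x t) * l1 t + x t * l2 t))
    (hpos : 0 < m - M) :
    ∃ s ∈ Set.Ioc γ (1 / 2 : ℝ), m - M ≤ (L γ - L s) / γ := by
  classical
  set a : ℕ → ℝ := fun t => l2 t - l1 t with ha
  set S := (Finset.range T).filter (fun t => γ < x t) with hSdef
  have hmM : m - M = ∑ t ∈ Finset.range T, a t := by
    rw [hm, hM, ← Finset.sum_sub_distrib]
  have hsplit := Finset.sum_filter_add_sum_filter_not (Finset.range T) (fun t => γ < x t) a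
  have hneg : ∑ t ∈ (Finset.range T).filter (fun t => ¬ γ < x t), a t ≤ 0 := by
    apply Finset.sum_nonpos
    intro t ht
    rcases Finset.mem_filter.mp ht with ⟨htr, hle⟩
    push_neg at hle
    have hl2z := hzero t (Finset.mem_range.mp htr) hle
    have h1 := (hl1 t (Finset.mem_range.mp htr)).1
    simp only [ha, hl2z]
    linarith
  have hSa : m - M ≤ ∑ t ∈ S, a t := by
    rw [hmM, ← hsplit]
    linarith
  have hSapos : 0 < ∑ t ∈ S, a t := lt_of_lt_of_le hpos hSa
  have hγ12 : γ < 1/2 := by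
    rcases lt_or_eq_of_le hγ2 with h | h
    · exact h
    · exfalso
      have hSe : S = ∅ := by
        apply Finset.filter_eq_empty_iff.mpr
        intro t ht
        push_neg
        rw [h]
        exact hx t (Finset.mem_range.mp ht)
      rw [hSe] at hSapos
      simp at hSapos
  obtain ⟨v, hv1, hv2, hv3⟩ := two_arm_aux x a S γ (le_of_lt hγ0) hγ12
    (fun t ht => by
      rcases Finset.mem_filter.mp ht with ⟨htr, hgt⟩
      exact ⟨hgt, hx t (Finset.mem_range.mp htr)⟩)
  refine ⟨v, ⟨hv1, hv2⟩, ?_⟩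
  have hdiff : L γ - L v = ∑ t ∈ S, (if x t ≤ v then x t * a t else 0) := by
    rw [hL γ, hL v, ← Finset.sum_sub_distrib, hSdef, Finset.sum_filter]
    apply Finset.sum_congr rfl
    intro t _
    by_cases h1 : γ < x t
    · rw [if_pos h1, if_neg (not_le.mpr h1)]
      by_cases h2 : x t ≤ v
      · rw [if_pos h2, if_pos h2]
        simp only [ha]
        ring
      · rw [if_neg h2, if_neg h2]
        ring
    · push_neg at h1
      rw [if_neg (not_lt.mpr (not_lt.mp (fun h => h1.not_gt h)))]
      rw [if_pos h1, if_pos (le_trans h1 (le_of_lt hv1))]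
      ring
  rw [le_div_iff₀ hγ0]
  calc (m - M) * γ = γ * (m - M) := mul_comm _ _
    _ ≤ γ * ∑ t ∈ S, a t := mul_le_mul_of_nonneg_left hSa (le_of_lt hγ0)
    _ ≤ ∑ t ∈ S, (if x t ≤ v then x t * a t else 0) := hv3
    _ = L γ - L v := hdiff.symm
end

section
/- Monotonicity preservation under truncation: if q ∈ Δ_K satisfies q(k+1) ≥ q(k+2) ≥ ⋯ ≥ q(K), then for any s ∈ (0,1/2] the truncated vector T^k_s q also satisfies (T^k_s q)(k+1) ≥ (T^k_s q)(k+2) ≥ ⋯ ≥ (T^k_s q)(K), and there exists an index π ∈ {k+1,…,K+1} such that (T^k_s q)(i) = 0 for all i ≥ π and (T^k_s q)(i) = q(i) for all k < i < π. -/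
open Finset

/-- truncation preserves the non-increasing order of the minority
coordinates, and acts by zeroing out a final segment of them. (0-indexed arms:
minority arms are `i ≥ k`, and the cutoff `π ∈ {k,…,K}` corresponds to the paper's
`π ∈ {k+1,…,K+1}`.) -/
theorem trunc_preserves_minority_order (K k : ℕ) (s : ℝ) (q : Fin K → ℝ)
    (hK : 1 ≤ K) (hk1 : 1 ≤ k) (hkK : k ≤ K)
    (hs : 0 < s) (hs2 : s ≤ 1 / 2)
    (hq0 : ∀ i, 0 ≤ q i) (hq1 : ∑ i, q i = 1)
    (hmaj : 0 < ∑ j : Fin K, if (j : ℕ) < k then q j else 0)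
    (hsorted : ∀ i j : Fin K, k ≤ (i : ℕ) → i ≤ j → q j ≤ q i) :
    (∀ i j : Fin K, k ≤ (i : ℕ) → i ≤ j → trunc K k s q j ≤ trunc K k s q i) ∧
    ∃ π : ℕ, k ≤ π ∧ π ≤ K ∧
      (∀ i : Fin K, π ≤ (i : ℕ) → trunc K k s q i = 0) ∧
      (∀ i : Fin K, k ≤ (i : ℕ) → (i : ℕ) < π → trunc K k s q i = q i) := by
  constructor
  · intro i j hki hij
    have hkj : k ≤ (j : ℕ) := hki.trans hij
    simp only [trunc, if_pos hki, if_pos hkj]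
    by_cases hj : q j ≤ s
    · rw [if_pos hj]
      split_ifs with hi
      · exact le_refl 0
      · exact le_of_lt (hs.trans (lt_of_not_ge hi))
    · rw [if_neg hj]
      have : q j ≤ q i := hsorted i j hki hij
      have hi : ¬ q i ≤ s := fun h => hj (this.trans h)
      rw [if_neg hi]
      exact this
  · set S : Finset (Fin K) := Finset.univ.filter (fun i => k ≤ (i : ℕ) ∧ q i ≤ s) with hS
    by_cases hne : S.Nonempty
    · set m := S.min' hne with hm
      have hmS : m ∈ S := S.min'_mem hne
      simp only [hS, Finset.mem_filter, Finset.mem_univ, true_and] at hmS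
      refine ⟨(m : ℕ), hmS.1, le_of_lt m.isLt, ?_, ?_⟩
      · intro i hi
        have hmi : m ≤ i := hi
        have hki : k ≤ (i : ℕ) := hmS.1.trans hi
        have hqi : q i ≤ s := (hsorted m i hmS.1 hmi).trans hmS.2
        simp [trunc, hki, hqi]
      · intro i hki hilt
        have hiS : i ∉ S := fun h => absurd (S.min'_le i h) (by
          intro hle
          exact absurd (Fin.le_iff_val_le_val.mp hle) (not_le_of_gt hilt))
        simp only [hS, Finset.mem_filter, Finset.mem_univ, true_and, not_and, not_le] at hiS
        have hqi : ¬ q i ≤ s := not_le_of_gt (hiS hki)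
        simp [trunc, hki, hqi]
    · refine ⟨K, hkK, le_refl K, ?_, ?_⟩
      · intro i hi
        exact absurd hi (not_le_of_gt i.isLt)
      · intro i hki _
        have hiS : i ∉ S := fun h => hne ⟨i, h⟩
        simp only [hS, Finset.mem_filter, Finset.mem_univ, true_and, not_and, not_le] at hiS
        have hqi : ¬ q i ≤ s := not_le_of_gt (hiS hki)
        simp [trunc, hki, hqi]
end

section
/- Explicit fixed point formula given a consistent cutoff map: let S ⊂ [0,1/2] be finite, W ∈ Δ_{1+|S|}, ζ ∈ Δ_K with ζ(1) ≥ ⋯ ≥ ζ(K), k ∈ [K], and let π : S → {k+1,…,K+1}. Define q_π(i) = (W(1)/(1 − Σ_{s∈S, π_s>i} W(s)))·ζ(i) for i > k and q_π(i) = (ζ(i)/Σ_{j≤k} ζ(j))·(1 − Σ_{j>k} q_π(j)) for i ≤ k. If for all s ∈ S and all i > k one has q_π(i) > s ⟺ π_s > i, and W(1) > 0 and Σ_{j≤k} ζ(j) > 0, then q_π ∈ Δ_K and q_π = W(1)·ζ + Σ_{s∈S} W(s)·T^k_s q_π. -/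
open Finset

/-- explicit fixed point formula given a consistent cutoff map.
(0-indexed arms; the cutoff `π s ∈ {k,…,K}` corresponds to the paper's
`π_s ∈ {k+1,…,K+1}`, and "`q_π(i) > s ⟺ π_s > i`" becomes `s < q i ↔ i < π s`.) -/
theorem explicit_fixed_point (K k : ℕ)
    (S : Finset ℝ) (hS : ∀ s ∈ S, s ∈ Set.Icc (0 : ℝ) (1 / 2))
    (W1 : ℝ) (WS : ℝ → ℝ) (ζ : Fin K → ℝ) (π : ℝ → ℕ) (q : Fin K → ℝ)
    (hK : 1 ≤ K) (hk1 : 1 ≤ k) (hkK : k ≤ K)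
    (hW1 : 0 < W1) (hWS0 : ∀ s ∈ S, 0 ≤ WS s)
    (hWsum : W1 + ∑ s ∈ S, WS s = 1)
    (hζ0 : ∀ i, 0 ≤ ζ i) (hζ1 : ∑ i, ζ i = 1)
    (hζsorted : ∀ i j : Fin K, i ≤ j → ζ j ≤ ζ i)
    (hζmaj : 0 < ∑ j : Fin K, if (j : ℕ) < k then ζ j else 0)
    (hπ : ∀ s ∈ S, k ≤ π s ∧ π s ≤ K)
    (hqmin : ∀ i : Fin K, k ≤ (i : ℕ) →
      q i = W1 / (1 - ∑ s ∈ S, if (i : ℕ) < π s then WS s else 0) * ζ i)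
    (hqmaj : ∀ i : Fin K, (i : ℕ) < k →
      q i = (ζ i / ∑ j : Fin K, if (j : ℕ) < k then ζ j else 0) *
        (1 - ∑ j : Fin K, if k ≤ (j : ℕ) then q j else 0))
    (hcons : ∀ s ∈ S, ∀ i : Fin K, k ≤ (i : ℕ) → (s < q i ↔ (i : ℕ) < π s)) :
    ((∀ i, 0 ≤ q i) ∧ ∑ i, q i = 1) ∧
    ∀ i, q i = W1 * ζ i + ∑ s ∈ S, WS s * trunc K k s q i := by
  have hWsum' : ∑ s ∈ S, WS s = 1 - W1 := by linarith
  have hDge : ∀ j : Fin K, W1 ≤ 1 - ∑ s ∈ S, (if (j : ℕ) < π s then WS s else 0) := by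
    intro j
    have h1 : ∑ s ∈ S, (if (j : ℕ) < π s then WS s else 0) ≤ ∑ s ∈ S, WS s := by
      refine Finset.sum_le_sum fun s hs => ?_
      by_cases h : (j : ℕ) < π s
      · simp [h]
      · simp [h, hWS0 s hs]
    linarith
  have hDpos : ∀ j : Fin K, 0 < 1 - ∑ s ∈ S, (if (j : ℕ) < π s then WS s else 0) :=
    fun j => lt_of_lt_of_le hW1 (hDge j)
  have hqD : ∀ j : Fin K, k ≤ (j : ℕ) →
      q j * (1 - ∑ s ∈ S, (if (j : ℕ) < π s then WS s else 0)) = W1 * ζ j := by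
    intro j hj
    rw [hqmin j hj]
    field_simp [(hDpos j).ne']
  have hqmin0 : ∀ j : Fin K, k ≤ (j : ℕ) → 0 ≤ q j := by
    intro j hj; rw [hqmin j hj]
    exact mul_nonneg (div_nonneg hW1.le (hDpos j).le) (hζ0 j)
  have hqminle : ∀ j : Fin K, k ≤ (j : ℕ) → q j ≤ ζ j := by
    intro j hj; rw [hqmin j hj]
    have h1 : W1 / (1 - ∑ s ∈ S, (if (j : ℕ) < π s then WS s else 0)) ≤ 1 :=
      (div_le_one (hDpos j)).mpr (hDge j)
    calc W1 / (1 - ∑ s ∈ S, (if (j : ℕ) < π s then WS s else 0)) * ζ j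
        ≤ 1 * ζ j := mul_le_mul_of_nonneg_right h1 (hζ0 j)
      _ = ζ j := one_mul _
  have hsplitζ : (∑ j : Fin K, if (j : ℕ) < k then ζ j else 0)
      + (∑ j : Fin K, if k ≤ (j : ℕ) then ζ j else 0) = 1 := by
    rw [← hζ1, ← Finset.sum_add_distrib]
    refine Finset.sum_congr rfl fun j _ => ?_
    rcases lt_or_ge (j : ℕ) k with h | h
    · simp [h, not_le.mpr h]
    · simp [h, not_lt.mpr h]
  have hQζ : (∑ j : Fin K, if k ≤ (j : ℕ) then q j else 0)
      ≤ (∑ j : Fin K, if k ≤ (j : ℕ) then ζ j else 0) := by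
    refine Finset.sum_le_sum fun j _ => ?_
    by_cases h : k ≤ (j : ℕ)
    · simpa [h] using hqminle j h
    · simp [h]
  have hMpos : 0 < 1 - (∑ j : Fin K, if k ≤ (j : ℕ) then q j else 0) := by linarith
  have hQmaj : (∑ j : Fin K, if (j : ℕ) < k then q j else 0)
      = 1 - (∑ j : Fin K, if k ≤ (j : ℕ) then q j else 0) := by
    have h1 : ∀ j : Fin K, (if (j : ℕ) < k then q j else 0)
        = (if (j : ℕ) < k then ζ j else 0) / (∑ j : Fin K, if (j : ℕ) < k then ζ j else 0)
          * (1 - ∑ j : Fin K, if k ≤ (j : ℕ) then q j else 0) := by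
      intro j
      by_cases h : (j : ℕ) < k
      · simp only [if_pos h]; exact hqmaj j h
      · simp [h]
    rw [Finset.sum_congr rfl fun j _ => h1 j, ← Finset.sum_mul, ← Finset.sum_div,
      div_self (ne_of_gt hζmaj), one_mul]
  have hq0 : ∀ i, 0 ≤ q i := by
    intro i
    by_cases h : k ≤ (i : ℕ)
    · exact hqmin0 i h
    · rw [hqmaj i (not_le.mp h)]
      exact mul_nonneg (div_nonneg (hζ0 i) hζmaj.le) hMpos.le
  have hqsum : ∑ i, q i = 1 := by
    have h1 : ∑ i, q i = (∑ j : Fin K, if (j : ℕ) < k then q j else 0)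
        + (∑ j : Fin K, if k ≤ (j : ℕ) then q j else 0) := by
      rw [← Finset.sum_add_distrib]
      refine Finset.sum_congr rfl fun j _ => ?_
      rcases lt_or_ge (j : ℕ) k with h | h
      · simp [h, not_le.mpr h]
      · simp [h, not_lt.mpr h]
    rw [h1, hQmaj]; ring
  refine ⟨⟨hq0, hqsum⟩, fun i => ?_⟩
  by_cases hi : k ≤ (i : ℕ)
  · -- minority arm
    have htr : ∑ s ∈ S, WS s * trunc K k s q i
        = (∑ s ∈ S, if (i : ℕ) < π s then WS s else 0) * q i := by
      rw [Finset.sum_mul]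
      refine Finset.sum_congr rfl fun s hs => ?_
      have hc := hcons s hs i hi
      simp only [trunc, if_pos hi]
      by_cases h : (i : ℕ) < π s
      · rw [if_neg (not_le.mpr (hc.mpr h)), if_pos h]
      · rw [if_pos (not_lt.mp fun hq => h (hc.mp hq)), if_neg h]
        ring
    rw [htr]
    linear_combination hqD i hi
  · -- majority arm
    have hik : (i : ℕ) < k := not_le.mp hi
    have hAsum : ∑ s ∈ S, WS s * (∑ j : Fin K, if k ≤ (j : ℕ) ∧ q j ≤ s then q j else 0)
        = W1 * (∑ j : Fin K, if k ≤ (j : ℕ) then ζ j else 0)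
          - W1 * (∑ j : Fin K, if k ≤ (j : ℕ) then q j else 0) := by
      have h1 : ∑ s ∈ S, WS s * (∑ j : Fin K, if k ≤ (j : ℕ) ∧ q j ≤ s then q j else 0)
          = ∑ j : Fin K, ∑ s ∈ S, WS s * (if k ≤ (j : ℕ) ∧ q j ≤ s then q j else 0) := by
        rw [Finset.sum_comm]
        exact Finset.sum_congr rfl fun s _ => Finset.mul_sum _ _ _
      rw [h1]
      have h2 : ∀ j : Fin K, ∑ s ∈ S, WS s * (if k ≤ (j : ℕ) ∧ q j ≤ s then q j else 0)
          = if k ≤ (j : ℕ) then W1 * ζ j - W1 * q j else 0 := by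
        intro j
        by_cases hj : k ≤ (j : ℕ)
        · rw [if_pos hj]
          have h3 : ∀ s ∈ S, WS s * (if k ≤ (j : ℕ) ∧ q j ≤ s then q j else 0)
              = (WS s - if (j : ℕ) < π s then WS s else 0) * q j := by
            intro s hs
            have hc := hcons s hs j hj
            by_cases h : q j ≤ s
            · have hπ' : ¬ (j : ℕ) < π s := fun hlt => absurd (hc.mpr hlt) (not_lt.mpr h)
              rw [if_pos ⟨hj, h⟩, if_neg hπ']; ring
            · have hπ' : (j : ℕ) < π s := hc.mp (not_le.mp h)
              rw [if_neg (fun hc' => h hc'.2), if_pos hπ']; ring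
          rw [Finset.sum_congr rfl h3, ← Finset.sum_mul, Finset.sum_sub_distrib, hWsum']
          linear_combination hqD j hj
        · rw [if_neg hj]
          refine Finset.sum_eq_zero fun s _ => ?_
          rw [if_neg (fun hc' => hj hc'.1), mul_zero]
      rw [Finset.sum_congr rfl fun j _ => h2 j]
      rw [Finset.mul_sum, Finset.mul_sum, ← Finset.sum_sub_distrib]
      refine Finset.sum_congr rfl fun j _ => ?_
      by_cases hj : k ≤ (j : ℕ) <;> simp [hj]
    have htr : ∑ s ∈ S, WS s * trunc K k s q i
        = ∑ s ∈ S, WS s * (q i * (1 + (∑ j : Fin K, if k ≤ (j : ℕ) ∧ q j ≤ s then q j else 0)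
            / (1 - ∑ j : Fin K, if k ≤ (j : ℕ) then q j else 0))) := by
      refine Finset.sum_congr rfl fun s _ => ?_
      simp only [trunc, if_neg hi]
      rw [hQmaj]
    rw [htr]
    have hexp : ∑ s ∈ S, WS s * (q i * (1 + (∑ j : Fin K, if k ≤ (j : ℕ) ∧ q j ≤ s then q j else 0)
            / (1 - ∑ j : Fin K, if k ≤ (j : ℕ) then q j else 0)))
        = (∑ s ∈ S, WS s) * q i
          + q i / (1 - ∑ j : Fin K, if k ≤ (j : ℕ) then q j else 0)
            * (∑ s ∈ S, WS s * (∑ j : Fin K, if k ≤ (j : ℕ) ∧ q j ≤ s then q j else 0)) := by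
      rw [Finset.sum_mul, Finset.mul_sum, ← Finset.sum_add_distrib]
      refine Finset.sum_congr rfl fun s _ => ?_
      ring
    rw [hexp, hAsum, hWsum', hqmaj i hik]
    have hm : (∑ j : Fin K, if k ≤ (j : ℕ) then ζ j else 0)
        = 1 - (∑ j : Fin K, if (j : ℕ) < k then ζ j else 0) := by linarith
    rw [hm]
    field_simp [hζmaj.ne', hMpos.ne']
    ring
end
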